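/- Let n ≥ 1, 1 ≤ i ≤ j ≤ n, k ≥ 0, and let P be a k-Rvalid vector of size n with exactly i nonempty entries. Then the number of elements of succ(P) having exactly j nonempty entries equals ((n−i)!/(n−j)!)·T(i,j), where T(i,j) is the number of partitions of {1,…,2i} into j nonempty blocks such that the elements 1, 2, …, i lie in pairwise distinct blocks (T(i,j) is the i-restricted Stirling number {2i over j}_i). -/

import Mathlib

open Finset

/-- `Π·h`: the vector whose `q`-th entry is the union of the `Π p` over all `p` with `h p = q`. -/
def dotAct {n : ℕ} (Pi : Fin n → Finset ℕ) (h : Fin n → Fin n) : Fin n → Finset ℕ :=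
  fun q => (Finset.univ.filter (fun p => h p = q)).biUnion Pi

/-- Entrywise union of two vectors of sets. -/
def vUnion {n : ℕ} (Pi Pi' : Fin n → Finset ℕ) : Fin n → Finset ℕ :=
  fun q => Pi q ∪ Pi' q

/-- `r = max (π₀ ∪ … ∪ π_{n−1})`. -/
def vMax {n : ℕ} (Pi : Fin n → Finset ℕ) : ℕ :=
  (Finset.univ.sup Pi).sup id

/-- `Π↑`: add `r = max (π₀ ∪ … ∪ π_{n−1})` to every element of every entry. -/
def vUp {n : ℕ} (Pi : Fin n → Finset ℕ) : Fin n → Finset ℕ :=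
  fun q => (Pi q).image (· + vMax Pi)

/-- A `k`-EXPcomposition of size `n`: pairwise disjoint entries whose union is `{1,…,2^k}`. -/
def IsEXP {n : ℕ} (k : ℕ) (Pi : Fin n → Finset ℕ) : Prop :=
  (∀ p q : Fin n, p ≠ q → Disjoint (Pi p) (Pi q)) ∧
    Finset.univ.sup Pi = Finset.Icc 1 (2 ^ k)

/-- A `k`-Rvalid vector of size `n`. -/
def IsRvalid {n : ℕ} (k : ℕ) (ρ : Fin n → Finset ℕ) : Prop :=
  IsEXP k ρ ∧ (∀ p : Fin n, p.val = 0 → 1 ∈ ρ p) ∧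
    ∀ k' < k, ∀ i ∈ Finset.Icc 1 (2 ^ k'), ∀ j ∈ Finset.Icc 1 (2 ^ k'),
      (∃ α, i ∈ ρ α ∧ j ∈ ρ α) → ∃ β, i + 2 ^ k' ∈ ρ β ∧ j + 2 ^ k' ∈ ρ β

/-- A `k`-Lvalid vector of size `m`. -/
def IsLvalid {m : ℕ} (k : ℕ) (lam : Fin m → Finset ℕ) : Prop :=
  IsEXP k lam ∧ (∀ p : Fin m, p.val = 0 → 2 ^ k ∈ lam p) ∧
    ∀ k' < k, ∀ i ∈ Finset.Icc 1 (2 ^ k'), ∀ j ∈ Finset.Icc 1 (2 ^ k'),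
      (∃ α, 2 ^ k + 1 - i ∈ lam α ∧ 2 ^ k + 1 - j ∈ lam α) →
        ∃ β, 2 ^ k + 1 - (i + 2 ^ k') ∈ lam β ∧ 2 ^ k + 1 - (j + 2 ^ k') ∈ lam β

/-- Number of nonempty entries of a vector of sets. -/
def nne {n : ℕ} (Pi : Fin n → Finset ℕ) : ℕ :=
  (Finset.univ.filter (fun q => Pi q ≠ ∅)).card

/-- `succ(P) = {P ∪ (P·g)↑ : g}`. -/
def succSet {n : ℕ} (P : Fin n → Finset ℕ) : Finset (Fin n → Finset ℕ) :=
  (Finset.univ : Finset (Fin n → Fin n)).image (fun g => vUnion P (vUp (dotAct P g)))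

/-- The graded set `U_{m,n}^{(k)}` of U-pairs. -/
def Uset (m n : ℕ) : ℕ → Set ((Fin m → Finset ℕ) × (Fin n → Finset ℕ))
  | 0 => {x | x = (fun p => if p.val = 0 then {1} else ∅,
                   fun q => if q.val = 0 then {1} else ∅)}
  | k + 1 => {x | ∃ L P, (L, P) ∈ Uset m n k ∧ ∃ (f : Fin m → Fin m) (g : Fin n → Fin n),
      x = (vUnion (dotAct L f) (vUp L), vUnion P (vUp (dotAct P g)))}

/-- The `r`-Stirling number: partitions of `{1,…,a}` into `b` nonempty blocks
with `1,…,r` in pairwise distinct blocks. -/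
noncomputable def rStirling (a b r : ℕ) : ℕ :=
  Set.ncard {C : Finset (Finset ℕ) |
    C.card = b ∧ (∅ ∉ C) ∧
    (∀ B ∈ C, ∀ B' ∈ C, B ≠ B' → Disjoint B B') ∧
    C.sup id = Finset.Icc 1 a ∧
    ∀ x ∈ Finset.Icc 1 r, ∀ y ∈ Finset.Icc 1 r, x ≠ y →
      ∀ B ∈ C, x ∈ B → y ∉ B}

/-- The Stirling number of the second kind: the number of partitions of an
`a`-element set into `b` nonempty blocks. -/
noncomputable def stirling2 (a b : ℕ) : ℕ := rStirling a b 0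

/-- The entry `s_n^{(i,j)}` (with `1 ≤ i,j ≤ n`). -/
noncomputable def sEntry (n i j : ℕ) : ℕ :=
  if i ≤ j then
    (j - i).factorial * Nat.choose (n - i) (j - i) *
      ∑ α ∈ Finset.Icc (j - i) i, Nat.choose i α * i ^ (i - α) * stirling2 α (j - i)
  else 0

/-- The matrix `S_n`, with rows and columns indexed by `{1,…,n}`. -/
noncomputable def Smat (n : ℕ) : Matrix (Fin n) (Fin n) ℕ :=
  fun i j => sEntry n (i.val + 1) (j.val + 1)

/-- One step of the shuffle-automaton action on subsets of the grid. -/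
def stepE {m n : ℕ} (E : Finset (Fin m × Fin n)) (f : Fin m → Fin m) (g : Fin n → Fin n) :
    Finset (Fin m × Fin n) :=
  E.image (fun p => (f p.1, p.2)) ∪ E.image (fun p => (p.1, g p.2))

/-- Reachability from `{(0,0)}` by finitely many steps. -/
def Reach {m n : ℕ} (hm : 0 < m) (hn : 0 < n) (E : Finset (Fin m × Fin n)) : Prop :=
  Relation.ReflTransGen (fun E1 E2 => ∃ f g, E2 = stepE E1 f g)
    {(⟨0, hm⟩, ⟨0, hn⟩)} E

/-- Reachability from `{(0,0)}` in at most `t` steps. -/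
def ReachIn {m n : ℕ} (hm : 0 < m) (hn : 0 < n) :
    ℕ → Finset (Fin m × Fin n) → Prop
  | 0, E => E = {(⟨0, hm⟩, ⟨0, hn⟩)}
  | t + 1, E => ReachIn hm hn t E ∨
      ∃ E' f g, ReachIn hm hn t E' ∧ E = stepE E' f g

/-- `s(Λ,P) = {(i,j) : λ_i ∩ ρ_j ≠ ∅}`. -/
def sTab {m n : ℕ} (L : Fin m → Finset ℕ) (P : Fin n → Finset ℕ) :
    Finset (Fin m × Fin n) :=
  Finset.univ.filter (fun p => (L p.1 ∩ P p.2).Nonempty)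

section B

def partsCond (i j : ℕ) (C : Finset (Finset ℕ)) : Prop :=
  C.card = j ∧ (∅ ∉ C) ∧
    (∀ B ∈ C, ∀ B' ∈ C, B ≠ B' → Disjoint B B') ∧
    C.sup id = Finset.Icc 1 (2 * i) ∧
    ∀ x ∈ Finset.Icc 1 i, ∀ y ∈ Finset.Icc 1 i, x ≠ y →
      ∀ B ∈ C, x ∈ B → y ∉ B

noncomputable def PartsFin (i j : ℕ) : Finset (Finset (Finset ℕ)) :=
  @Finset.filter _ (partsCond i j) (Classical.decPred _)
    ((Finset.Icc 1 (2 * i)).powerset.powerset)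

lemma mem_PartsFin {i j : ℕ} {C : Finset (Finset ℕ)} :
    C ∈ PartsFin i j ↔ partsCond i j C := by
  classical
  rw [PartsFin, Finset.mem_filter, and_iff_right_iff_imp]
  intro hC
  rw [Finset.mem_powerset]
  intro B hB
  rw [Finset.mem_powerset, ← hC.2.2.2.1]
  exact Finset.le_sup (f := id) hB

lemma rStirling_eq (i j : ℕ) : rStirling (2 * i) j i = (PartsFin i j).card := by
  rw [← Set.ncard_coe_finset, rStirling]
  congr 1
  ext C
  simp only [Finset.coe_filter, Set.mem_setOf_eq, Finset.mem_coe, mem_PartsFin]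
  rfl

/-- unique element `≤ i` of a non-extra block -/
def selF (i : ℕ) (B : Finset ℕ) : ℕ := (B.filter (· ≤ i)).sup id

/-- blocks all of whose elements exceed `i` -/
def extrasF (i : ℕ) (C : Finset (Finset ℕ)) : Finset (Finset ℕ) :=
  C.filter (fun B => ∀ x ∈ B, i < x)

/-- the block of `C` containing `m` -/
def blkOf (C : Finset (Finset ℕ)) (m : ℕ) : Finset ℕ :=
  (C.filter (fun B => m ∈ B)).sup id

variable {i j : ℕ} {C : Finset (Finset ℕ)} (hC : partsCond i j C)
include hC

lemma block_sub {B : Finset ℕ} (hB : B ∈ C) : B ⊆ Finset.Icc 1 (2 * i) := by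
  rw [← hC.2.2.2.1]; exact Finset.le_sup (f := id) hB

lemma blkOf_spec {m : ℕ} (hm : m ∈ Finset.Icc 1 (2 * i)) :
    blkOf C m ∈ C ∧ m ∈ blkOf C m ∧ ∀ B ∈ C, m ∈ B → B = blkOf C m := by
  rw [← hC.2.2.2.1] at hm
  obtain ⟨B₀, hB₀, hmB₀⟩ := Finset.mem_sup.mp hm
  have key : C.filter (fun B => m ∈ B) = {B₀} := by
    ext B
    simp only [Finset.mem_filter, Finset.mem_singleton]
    constructor
    · rintro ⟨hB, hmB⟩
      by_contra hne
      exact (Finset.disjoint_left.mp (hC.2.2.1 B hB B₀ hB₀ hne) hmB) hmB₀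
    · rintro rfl; exact ⟨hB₀, hmB₀⟩
  have hblk : blkOf C m = B₀ := by rw [blkOf, key, Finset.sup_singleton]; rfl
  rw [hblk]
  refine ⟨hB₀, hmB₀, fun B hB hmB => ?_⟩
  by_contra hne
  exact (Finset.disjoint_left.mp (hC.2.2.1 B hB B₀ hB₀ hne) hmB) hmB₀

lemma sel_spec {B : Finset ℕ} (hB : B ∈ C) (hBne : ¬ B ∈ extrasF i C) :
    B.filter (· ≤ i) = {selF i B} ∧ 1 ≤ selF i B ∧ selF i B ≤ i ∧ selF i B ∈ B := by
  simp only [extrasF, Finset.mem_filter, hB, true_and, not_forall, not_lt] at hBne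
  obtain ⟨x, hxB, hxi⟩ := hBne
  have hx1 : 1 ≤ x := (Finset.mem_Icc.mp (block_sub hC hB hxB)).1
  have key : B.filter (· ≤ i) = {x} := by
    ext y
    simp only [Finset.mem_filter, Finset.mem_singleton]
    constructor
    · rintro ⟨hyB, hyi⟩
      by_contra hne
      have hy1 : 1 ≤ y := (Finset.mem_Icc.mp (block_sub hC hB hyB)).1
      exact hC.2.2.2.2 y (Finset.mem_Icc.mpr ⟨hy1, hyi⟩) x (Finset.mem_Icc.mpr ⟨hx1, hxi⟩)
        hne B hB hyB hxB
    · rintro rfl; exact ⟨hxB, hxi⟩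
  have hsel : selF i B = x := by rw [selF, key, Finset.sup_singleton]; rfl
  rw [key, hsel]
  exact ⟨rfl, hx1, hxi, hxB⟩

lemma extras_card : i ≤ j ∧ (extrasF i C).card = j - i := by
  classical
  have hmeet : (C.filter (fun B => ¬ ∀ x ∈ B, i < x)).card = i := by
    have key : (C.filter (fun B => ¬ ∀ x ∈ B, i < x)).card = (Finset.Icc 1 i).card := by
      apply Finset.card_bij (fun B _ => selF i B)
      · intro B hB
        rw [Finset.mem_filter] at hB
        obtain ⟨-, h1, h2, -⟩ := sel_spec hC hB.1 (by simp [extrasF, hB.1, hB.2])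
        exact Finset.mem_Icc.mpr ⟨h1, h2⟩
      · intro B hB B' hB' hsel
        rw [Finset.mem_filter] at hB hB'
        obtain ⟨-, -, -, h4⟩ := sel_spec hC hB.1 (by simp [extrasF, hB.1, hB.2])
        obtain ⟨-, -, -, h4'⟩ := sel_spec hC hB'.1 (by simp [extrasF, hB'.1, hB'.2])
        by_contra hne
        rw [hsel] at h4
        exact (Finset.disjoint_left.mp (hC.2.2.1 B hB.1 B' hB'.1 hne) h4) h4'
      · intro m hm
        rw [Finset.mem_Icc] at hm
        have hm2 : m ∈ Finset.Icc 1 (2 * i) := Finset.mem_Icc.mpr ⟨hm.1, by omega⟩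
        obtain ⟨hB, hmB, -⟩ := blkOf_spec hC hm2
        have hne : ¬ ∀ x ∈ blkOf C m, i < x := fun h => by
          have := h m hmB; omega
        refine ⟨blkOf C m, Finset.mem_filter.mpr ⟨hB, hne⟩, ?_⟩
        obtain ⟨keyB, -, -, -⟩ := sel_spec hC hB (by simp [extrasF, hB, hne])
        have hms : m ∈ (blkOf C m).filter (· ≤ i) := Finset.mem_filter.mpr ⟨hmB, hm.2⟩
        rw [keyB, Finset.mem_singleton] at hms
        exact hms.symm
    rw [key, Nat.card_Icc]; omega
  have hsplit : (extrasF i C).card + (C.filter (fun B => ¬ ∀ x ∈ B, i < x)).card = C.card := by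
    rw [extrasF]
    exact Finset.card_filter_add_card_filter_not (fun B => ∀ x ∈ B, i < x)
  rw [hmeet, hC.1] at hsplit
  omega

end B

section S
variable {n : ℕ} (S : Finset (Fin n))

/-- enumeration of `S` -/
def iotaS : Fin S.card → Fin n := fun a => ((S.orderIsoOfFin rfl) a : Fin n)

/-- 1-based rank of an element of `S` -/
def rkS : Fin n → ℕ := fun p =>
  if hp : p ∈ S then (((S.orderIsoOfFin rfl).symm ⟨p, hp⟩ : Fin S.card) : ℕ) + 1 else 0

/-- inverse of `rkS` -/
def unrkS (z : Fin n) : ℕ → Fin n := fun m =>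
  if h : m - 1 < S.card then iotaS S ⟨m - 1, h⟩ else z

lemma iotaS_mem (a : Fin S.card) : iotaS S a ∈ S := ((S.orderIsoOfFin rfl) a).2

lemma rk_iota (a : Fin S.card) : rkS S (iotaS S a) = (a : ℕ) + 1 := by
  simp only [rkS, dif_pos (iotaS_mem S a)]
  have : (⟨iotaS S a, iotaS_mem S a⟩ : {x // x ∈ S}) = (S.orderIsoOfFin rfl) a :=
    Subtype.ext rfl
  rw [this, OrderIso.symm_apply_apply]

lemma rk_iota' (m : ℕ) (h : m < S.card) : rkS S (iotaS S ⟨m, h⟩) = m + 1 := by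
  rw [rk_iota]

lemma rk_bounds {p : Fin n} (hp : p ∈ S) : 1 ≤ rkS S p ∧ rkS S p ≤ S.card := by
  simp only [rkS, dif_pos hp]
  have := ((S.orderIsoOfFin rfl).symm ⟨p, hp⟩).2
  omega

lemma rk_inj {p p' : Fin n} (hp : p ∈ S) (hp' : p' ∈ S) (h : rkS S p = rkS S p') :
    p = p' := by
  simp only [rkS, dif_pos hp, dif_pos hp'] at h
  have h2 : (S.orderIsoOfFin rfl).symm ⟨p, hp⟩ = (S.orderIsoOfFin rfl).symm ⟨p', hp'⟩ :=
    Fin.ext (by omega)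
  have := (S.orderIsoOfFin rfl).symm.injective h2
  exact congrArg Subtype.val this

lemma unrk_rk (z : Fin n) {p : Fin n} (hp : p ∈ S) : unrkS S z (rkS S p) = p := by
  simp only [rkS, dif_pos hp, unrkS]
  have hlt : ((S.orderIsoOfFin rfl).symm ⟨p, hp⟩ : Fin S.card).val + 1 - 1 < S.card := by
    have := ((S.orderIsoOfFin rfl).symm ⟨p, hp⟩).2; omega
  rw [dif_pos hlt, iotaS]
  have : (⟨(((S.orderIsoOfFin rfl).symm ⟨p, hp⟩ : Fin S.card) : ℕ) + 1 - 1, hlt⟩ : Fin S.card)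
      = (S.orderIsoOfFin rfl).symm ⟨p, hp⟩ := Fin.ext (by simp)
  rw [this, OrderIso.apply_symm_apply]

lemma unrk_mem_rk (z : Fin n) {m : ℕ} (h1 : 1 ≤ m) (h2 : m ≤ S.card) :
    unrkS S z m ∈ S ∧ rkS S (unrkS S z m) = m := by
  have hlt : m - 1 < S.card := by omega
  rw [unrkS, dif_pos hlt]
  refine ⟨iotaS_mem S _, ?_⟩
  rw [rk_iota']
  omega

/-- the block associated to a target `q` -/
def blkF (g : Fin n → Fin n) (q : Fin n) : Finset ℕ :=
  (if q ∈ S then {rkS S q} else ∅) ∪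
    (S.filter (fun p => g p = q)).image (fun p => S.card + rkS S p)

/-- the partition associated to `g` -/
def PhiF (g : Fin n → Fin n) : Finset (Finset ℕ) :=
  (S ∪ S.image g).image (blkF S g)

lemma mem_blkF {g : Fin n → Fin n} {q : Fin n} {x : ℕ} :
    x ∈ blkF S g q ↔ (q ∈ S ∧ x = rkS S q) ∨
      ∃ p, p ∈ S ∧ g p = q ∧ x = S.card + rkS S p := by
  rw [blkF, Finset.mem_union]
  constructor
  · rintro (h | h)
    · by_cases hq : q ∈ S
      · rw [if_pos hq, Finset.mem_singleton] at h; exact Or.inl ⟨hq, h⟩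
      · rw [if_neg hq] at h; simp at h
    · obtain ⟨p, hp, rfl⟩ := Finset.mem_image.mp h
      rw [Finset.mem_filter] at hp
      exact Or.inr ⟨p, hp.1, hp.2, rfl⟩
  · rintro (⟨hq, rfl⟩ | ⟨p, hp, hgp, rfl⟩)
    · exact Or.inl (by rw [if_pos hq]; exact Finset.mem_singleton_self _)
    · exact Or.inr (Finset.mem_image.mpr ⟨p, Finset.mem_filter.mpr ⟨hp, hgp⟩, rfl⟩)

lemma blkF_injOn {g : Fin n → Fin n} {q q' : Fin n}
    (hq : q ∈ S ∪ S.image g) (hq' : q' ∈ S ∪ S.image g)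
    (h : blkF S g q = blkF S g q') : q = q' := by
  have hmem : ∀ r : Fin n, r ∈ S ∪ S.image g → (blkF S g r).Nonempty := by
    intro r hr
    rcases Finset.mem_union.mp hr with h1 | h1
    · exact ⟨rkS S r, (mem_blkF S).mpr (Or.inl ⟨h1, rfl⟩)⟩
    · obtain ⟨p, hp, rfl⟩ := Finset.mem_image.mp h1
      exact ⟨S.card + rkS S p, (mem_blkF S).mpr (Or.inr ⟨p, hp, rfl, rfl⟩)⟩
  by_cases hqS : q ∈ S
  · have h1 : rkS S q ∈ blkF S g q' := h ▸ (mem_blkF S).mpr (Or.inl ⟨hqS, rfl⟩)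
    rcases (mem_blkF S).mp h1 with ⟨hq'S, he⟩ | ⟨p, hp, -, he⟩
    · exact rk_inj S hqS hq'S he
    · have := rk_bounds S hqS; have := rk_bounds S hp; omega
  · obtain ⟨x, hx⟩ := hmem q hq
    have hx' : x ∈ blkF S g q' := h ▸ hx
    rcases (mem_blkF S).mp hx with ⟨hqS', -⟩ | ⟨p, hp, hgp, rfl⟩
    · exact absurd hqS' hqS
    rcases (mem_blkF S).mp hx' with ⟨hq'S, he⟩ | ⟨p', hp', hgp', he⟩
    · have := rk_bounds S hp; have := rk_bounds S hq'S; omega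
    · have : p = p' := rk_inj S hp hp' (by omega)
      rw [← hgp, this, hgp']

lemma PhiF_parts {g : Fin n → Fin n} {j : ℕ} (hcard : (S ∪ S.image g).card = j) :
    partsCond S.card j (PhiF S g) := by
  have hub : ∀ q ∈ S ∪ S.image g, ∀ x ∈ blkF S g q, 1 ≤ x ∧ x ≤ 2 * S.card := by
    intro q hq x hx
    rcases (mem_blkF S).mp hx with ⟨hqS, rfl⟩ | ⟨p, hp, -, rfl⟩
    · have := rk_bounds S hqS; omega
    · have := rk_bounds S hp; omega
  refine ⟨?_, ?_, ?_, ?_, ?_⟩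
  · rw [PhiF, Finset.card_image_of_injOn (fun q hq q' hq' => blkF_injOn S hq hq'), hcard]
  · intro hemp
    obtain ⟨q, hq, he⟩ := Finset.mem_image.mp hemp
    have hne : (blkF S g q).Nonempty := by
      rcases Finset.mem_union.mp hq with h1 | h1
      · exact ⟨rkS S q, (mem_blkF S).mpr (Or.inl ⟨h1, rfl⟩)⟩
      · obtain ⟨p, hp, rfl⟩ := Finset.mem_image.mp h1
        exact ⟨S.card + rkS S p, (mem_blkF S).mpr (Or.inr ⟨p, hp, rfl, rfl⟩)⟩
    rw [he] at hne
    simp at hne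
  · rintro B hB B' hB' hne
    obtain ⟨q, hq, rfl⟩ := Finset.mem_image.mp hB
    obtain ⟨q', hq', rfl⟩ := Finset.mem_image.mp hB'
    rw [Finset.disjoint_left]
    intro x hx hx'
    apply hne
    rcases (mem_blkF S).mp hx with ⟨hqS, rfl⟩ | ⟨p, hp, hgp, rfl⟩ <;>
      rcases (mem_blkF S).mp hx' with ⟨hq'S, he⟩ | ⟨p', hp', hgp', he⟩
    · rw [rk_inj S hqS hq'S he]
    · have := rk_bounds S hqS; have := rk_bounds S hp'; omega
    · have := rk_bounds S hq'S; have := rk_bounds S hp; omega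
    · have : p = p' := rk_inj S hp hp' (by omega)
      rw [← hgp, this, hgp']
  · ext x
    rw [Finset.mem_sup, Finset.mem_Icc]
    constructor
    · rintro ⟨B, hB, hx⟩
      obtain ⟨q, hq, rfl⟩ := Finset.mem_image.mp hB
      exact hub q hq x hx
    · rintro ⟨h1, h2⟩
      by_cases hxi : x ≤ S.card
      · have hlt : x - 1 < S.card := by omega
        set p := iotaS S ⟨x - 1, hlt⟩ with hp
        have hpS : p ∈ S := iotaS_mem S _
        have hrk : rkS S p = x := by rw [hp, rk_iota']; omega
        refine ⟨blkF S g p, Finset.mem_image.mpr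
          ⟨p, Finset.mem_union.mpr (Or.inl hpS), rfl⟩, ?_⟩
        exact (mem_blkF S).mpr (Or.inl ⟨hpS, hrk.symm⟩)
      · have hlt : x - S.card - 1 < S.card := by omega
        set p := iotaS S ⟨x - S.card - 1, hlt⟩ with hp
        have hpS : p ∈ S := iotaS_mem S _
        have hrk : rkS S p = x - S.card := by rw [hp, rk_iota']; omega
        refine ⟨blkF S g (g p), Finset.mem_image.mpr
          ⟨g p, Finset.mem_union.mpr (Or.inr (Finset.mem_image.mpr ⟨p, hpS, rfl⟩)), rfl⟩, ?_⟩
        exact (mem_blkF S).mpr (Or.inr ⟨p, hpS, rfl, by omega⟩)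
  · intro x hx y hy hne B hB hxB hyB
    obtain ⟨q, hq, rfl⟩ := Finset.mem_image.mp hB
    rw [Finset.mem_Icc] at hx hy
    rcases (mem_blkF S).mp hxB with ⟨hqS, rfl⟩ | ⟨p, hp, -, rfl⟩
    · rcases (mem_blkF S).mp hyB with ⟨-, he⟩ | ⟨p', hp', -, he⟩
      · exact hne he.symm
      · have := rk_bounds S hp'; omega
    · have := rk_bounds S hp; omega

/-- the candidate functions -/
def Tset (z : Fin n) (j : ℕ) : Finset (Fin n → Fin n) :=
  Finset.univ.filter (fun g => (∀ p, p ∉ S → g p = z) ∧ (S ∪ S.image g).card = j)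

variable (z : Fin n) {j : ℕ} {C : Finset (Finset ℕ)}

/-- the function associated to a partition `C` and an assignment `φ` of extra blocks -/
def GF (φ : {B // B ∈ extrasF S.card C} → Fin n) : Fin n → Fin n := fun p =>
  if hp : p ∈ S then
    (if hB : blkOf C (S.card + rkS S p) ∈ extrasF S.card C
     then φ ⟨blkOf C (S.card + rkS S p), hB⟩
     else unrkS S z (selF S.card (blkOf C (S.card + rkS S p))))
  else z

lemma GF_spec_off (φ : {B // B ∈ extrasF S.card C} → Fin n) {p : Fin n} (hp : p ∉ S) :
    GF S z φ p = z := by simp only [GF, dif_neg hp]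

lemma GF_spec_extra (φ : {B // B ∈ extrasF S.card C} → Fin n) {p : Fin n} (hp : p ∈ S)
    {B : Finset ℕ} (hB : B ∈ extrasF S.card C)
    (heq : blkOf C (S.card + rkS S p) = B) :
    GF S z φ p = φ ⟨B, hB⟩ := by
  have hB' : blkOf C (S.card + rkS S p) ∈ extrasF S.card C := by rw [heq]; exact hB
  simp only [GF, dif_pos hp, dif_pos hB']
  congr 1
  exact Subtype.ext heq

lemma GF_spec_nonextra (φ : {B // B ∈ extrasF S.card C} → Fin n) {p : Fin n} (hp : p ∈ S)
    (hB : blkOf C (S.card + rkS S p) ∉ extrasF S.card C) :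
    GF S z φ p = unrkS S z (selF S.card (blkOf C (S.card + rkS S p))) := by
  simp only [GF, dif_pos hp, dif_neg hB]

variable (hC : partsCond S.card j C)
include z hC

lemma H1 {p : Fin n} (hp : p ∈ S) :
    blkOf C (S.card + rkS S p) ∈ C ∧ S.card + rkS S p ∈ blkOf C (S.card + rkS S p) ∧
      ∀ B ∈ C, S.card + rkS S p ∈ B → B = blkOf C (S.card + rkS S p) := by
  have := rk_bounds S hp
  exact blkOf_spec hC (Finset.mem_Icc.mpr ⟨by omega, by omega⟩)

lemma H3 {B : Finset ℕ} (hB : B ∈ extrasF S.card C) :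
    ∃ p, p ∈ S ∧ blkOf C (S.card + rkS S p) = B := by
  rw [extrasF, Finset.mem_filter] at hB
  have hBne : B.Nonempty := by
    rw [Finset.nonempty_iff_ne_empty]
    rintro rfl
    exact hC.2.1 hB.1
  obtain ⟨y, hy⟩ := hBne
  have hyI := Finset.mem_Icc.mp (block_sub hC hB.1 hy)
  have hyi : S.card < y := hB.2 y hy
  obtain ⟨hmem, hrk⟩ := unrk_mem_rk S z (m := y - S.card) (by omega) (by omega)
  refine ⟨unrkS S z (y - S.card), hmem, ?_⟩
  have hyeq : S.card + rkS S (unrkS S z (y - S.card)) = y := by omega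
  rw [hyeq]
  exact ((blkOf_spec hC (Finset.mem_Icc.mpr ⟨by omega, by omega⟩)).2.2 B hB.1 hy).symm

lemma GF_mem (φ : {B // B ∈ extrasF S.card C} → Fin n)
    (hφinj : Function.Injective φ) (hφS : ∀ B, φ B ∉ S) :
    GF S z φ ∈ Tset S z j ∧ PhiF S (GF S z φ) = C := by
  classical
  set g := GF S z φ with hg
  -- value dichotomy
  have hval : ∀ p, p ∈ S →
      (∃ hB : blkOf C (S.card + rkS S p) ∈ extrasF S.card C,
        g p = φ ⟨blkOf C (S.card + rkS S p), hB⟩) ∨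
      (blkOf C (S.card + rkS S p) ∉ extrasF S.card C ∧ g p ∈ S ∧
        rkS S (g p) = selF S.card (blkOf C (S.card + rkS S p)) ∧
        rkS S (g p) ∈ blkOf C (S.card + rkS S p)) := by
    intro p hp
    by_cases hB : blkOf C (S.card + rkS S p) ∈ extrasF S.card C
    · exact Or.inl ⟨hB, GF_spec_extra S z φ hp hB rfl⟩
    · obtain ⟨hfil, h1, h2, h3⟩ := sel_spec hC (H1 S z hC hp).1 hB
      have he := GF_spec_nonextra S z φ hp hB
      obtain ⟨hmem, hrk⟩ := unrk_mem_rk S z h1 h2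
      rw [← hg] at he
      refine Or.inr ⟨hB, by rw [he]; exact hmem, ?_, ?_⟩
      · rw [he, hrk]
      · rw [he, hrk]; exact h3
  -- the image description
  have hE : S ∪ S.image g = S ∪ (extrasF S.card C).attach.image φ := by
    ext q
    simp only [Finset.mem_union, Finset.mem_image]
    constructor
    · rintro (h | ⟨p, hp, rfl⟩)
      · exact Or.inl h
      · rcases hval p hp with ⟨hB, he⟩ | ⟨-, hmem, -, -⟩
        · exact Or.inr ⟨⟨_, hB⟩, Finset.mem_attach _ _, he.symm⟩
        · exact Or.inl hmem
    · rintro (h | ⟨⟨B, hB⟩, -, rfl⟩)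
      · exact Or.inl h
      · obtain ⟨p, hp, heq⟩ := H3 S z hC hB
        exact Or.inr ⟨p, hp, GF_spec_extra S z φ hp hB heq⟩
  have hdisj : Disjoint S ((extrasF S.card C).attach.image φ) := by
    rw [Finset.disjoint_right]
    rintro q hq
    obtain ⟨B, -, rfl⟩ := Finset.mem_image.mp hq
    exact hφS B
  have hcard : (S ∪ S.image g).card = j := by
    rw [hE, Finset.card_union_of_disjoint hdisj,
      Finset.card_image_of_injective _ hφinj, Finset.card_attach]
    have := extras_card hC
    omega
  have hT : g ∈ Tset S z j := by
    rw [Tset, Finset.mem_filter]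
    exact ⟨Finset.mem_univ g, fun p hp => GF_spec_off S z φ hp, hcard⟩
  refine ⟨hT, ?_⟩
  -- PhiF S g ⊆ C
  have hsub : PhiF S g ⊆ C := by
    intro B hB
    obtain ⟨q, hq, rfl⟩ := Finset.mem_image.mp hB
    by_cases hqS : q ∈ S
    · -- blkF S g q = blkOf C (rkS S q)
      have hrkq := rk_bounds S hqS
      have hspec := blkOf_spec hC (m := rkS S q) (Finset.mem_Icc.mpr ⟨by omega, by omega⟩)
      have : blkF S g q = blkOf C (rkS S q) := by
        ext x
        rw [mem_blkF]
        constructor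
        · rintro (⟨-, rfl⟩ | ⟨p, hp, hgp, rfl⟩)
          · exact hspec.2.1
          · rcases hval p hp with ⟨hBp, he⟩ | ⟨hBp, -, hrkgp, hrkmem⟩
            · exact absurd hqS (by rw [← hgp, he]; exact hφS _)
            · have : blkOf C (S.card + rkS S p) = blkOf C (rkS S q) := by
                apply hspec.2.2 _ (H1 S z hC hp).1
                rw [← hgp]
                exact hrkmem
              rw [← this]
              exact (H1 S z hC hp).2.1
        · intro hx
          have hxI := Finset.mem_Icc.mp (block_sub hC hspec.1 hx)
          by_cases hxi : x ≤ S.card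
          · left
            refine ⟨hqS, ?_⟩
            by_contra hne
            exact hC.2.2.2.2 x (Finset.mem_Icc.mpr ⟨hxI.1, hxi⟩)
              (rkS S q) (Finset.mem_Icc.mpr ⟨by omega, by omega⟩)
              hne _ hspec.1 hx hspec.2.1
          · right
            obtain ⟨hpm, hprk⟩ := unrk_mem_rk S z (m := x - S.card) (by omega) (by omega)
            set p := unrkS S z (x - S.card)
            have hxeq : S.card + rkS S p = x := by omega
            have hBeq : blkOf C (S.card + rkS S p) = blkOf C (rkS S q) := by
              refine ((blkOf_spec hC (m := S.card + rkS S p)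
                (Finset.mem_Icc.mpr ⟨by omega, by omega⟩)).2.2 _ hspec.1 ?_).symm
              rw [hxeq]; exact hx
            have hnotex : blkOf C (S.card + rkS S p) ∉ extrasF S.card C := by
              rw [hBeq, extrasF, Finset.mem_filter]
              rintro ⟨-, hall⟩
              have := hall (rkS S q) hspec.2.1
              omega
            rcases hval p hpm with ⟨hBp, -⟩ | ⟨-, -, hrkgp, -⟩
            · exact absurd hBp hnotex
            · refine ⟨p, hpm, ?_, by omega⟩
              obtain ⟨hfil, -, -, -⟩ := sel_spec hC hspec.1 (hBeq ▸ hnotex)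
              have hqin : rkS S q ∈ (blkOf C (rkS S q)).filter (· ≤ S.card) :=
                Finset.mem_filter.mpr ⟨hspec.2.1, by omega⟩
              rw [hfil, Finset.mem_singleton] at hqin
              apply rk_inj S _ hqS
              · rw [hrkgp, hBeq, ← hqin]
              · rcases hval p hpm with ⟨hBp, -⟩ | ⟨-, hm, -, -⟩
                · exact absurd hBp hnotex
                · exact hm
      rw [this]; exact hspec.1
    · -- q ∈ S.image g \ S
      have hqI : q ∈ S.image g := by
        rcases Finset.mem_union.mp hq with h | h
        · exact absurd h hqS
        · exact h
      obtain ⟨p₀, hp₀, hgp₀⟩ := Finset.mem_image.mp hqI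
      rcases hval p₀ hp₀ with ⟨hB₀, he₀⟩ | ⟨-, hm, -, -⟩
      · set B' := blkOf C (S.card + rkS S p₀) with hB'def
        have hqφ : q = φ ⟨B', hB₀⟩ := by rw [← hgp₀, he₀]
        have : blkF S g q = B' := by
          ext x
          rw [mem_blkF]
          constructor
          · rintro (⟨hqS', -⟩ | ⟨p, hp, hgp, rfl⟩)
            · exact absurd hqS' hqS
            · rcases hval p hp with ⟨hBp, hep⟩ | ⟨-, hm, -, -⟩
              · have : (⟨blkOf C (S.card + rkS S p), hBp⟩ :
                    {B // B ∈ extrasF S.card C}) = ⟨B', hB₀⟩ :=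
                  hφinj (by rw [← hep, hgp, hqφ])
                have hBB := congrArg Subtype.val this
                simp only at hBB
                rw [← hBB]
                exact (H1 S z hC hp).2.1
              · rw [hgp] at hm; exact absurd hm hqS
          · intro hx
            have hBC : B' ∈ C := (H1 S z hC hp₀).1
            have hxI := Finset.mem_Icc.mp (block_sub hC hBC hx)
            have hxgt : S.card < x := by
              rw [extrasF, Finset.mem_filter] at hB₀
              exact hB₀.2 x hx
            obtain ⟨hpm, hprk⟩ := unrk_mem_rk S z (m := x - S.card) (by omega) (by omega)
            set p := unrkS S z (x - S.card)
            have hxeq : S.card + rkS S p = x := by omega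
            have hBeq : blkOf C (S.card + rkS S p) = B' := by
              refine (((blkOf_spec hC (m := S.card + rkS S p)
                (Finset.mem_Icc.mpr ⟨by omega, by omega⟩)).2.2 _ hBC) ?_).symm
              rw [hxeq]; exact hx
            refine Or.inr ⟨p, hpm, ?_, by omega⟩
            rw [hg, GF_spec_extra S z φ hpm hB₀ hBeq, ← hqφ]
        rw [this]; exact (H1 S z hC hp₀).1
      · rw [hgp₀] at hm; exact absurd hm hqS
  have h1 : (PhiF S g).card = j := (PhiF_parts S hcard).1
  exact Finset.eq_of_subset_of_card_le hsub (by rw [h1, hC.1])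

lemma GF_inj (φ φ' : {B // B ∈ extrasF S.card C} → Fin n)
    (h : GF S z (C := C) φ = GF S z φ') : φ = φ' := by
  funext B
  obtain ⟨B, hB⟩ := B
  obtain ⟨p, hp, heq⟩ := H3 S z hC hB
  rw [← GF_spec_extra S z φ hp hB heq, ← GF_spec_extra S z φ' hp hB heq, h]

lemma fiber_sub {g : Fin n → Fin n} (hg : g ∈ Tset S z j) (hPhi : PhiF S g = C) :
    ∃ φ : {B // B ∈ extrasF S.card C} → Fin n,
      Function.Injective φ ∧ (∀ B, φ B ∉ S) ∧ GF S z φ = g := by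
  classical
  rw [Tset, Finset.mem_filter] at hg
  obtain ⟨-, hz, hcard⟩ := hg
  -- representation of extra blocks
  have hrep : ∀ B ∈ extrasF S.card C, ∃ q, q ∈ S.image g ∧ q ∉ S ∧ B = blkF S g q := by
    intro B hB
    have hBF : B ∈ PhiF S g := by
      rw [hPhi]
      exact (Finset.mem_filter.mp hB).1
    obtain ⟨q, hq, rfl⟩ := Finset.mem_image.mp hBF
    have hqS : q ∉ S := by
      intro hqS
      rw [extrasF, Finset.mem_filter] at hB
      have := hB.2 (rkS S q) ((mem_blkF S).mpr (Or.inl ⟨hqS, rfl⟩))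
      have := rk_bounds S hqS
      omega
    rcases Finset.mem_union.mp hq with h | h
    · exact absurd h hqS
    · exact ⟨q, h, hqS, rfl⟩
  -- the value recovered from a block
  have hval : ∀ q, q ∈ S.image g → q ∉ S →
      g (unrkS S z ((blkF S g q).sup id - S.card)) = q := by
    intro q hq hqS
    obtain ⟨p₀, hp₀, hgp₀⟩ := Finset.mem_image.mp hq
    have hne : (blkF S g q).Nonempty :=
      ⟨S.card + rkS S p₀, (mem_blkF S).mpr (Or.inr ⟨p₀, hp₀, hgp₀, rfl⟩)⟩
    have hsup : (blkF S g q).sup id ∈ blkF S g q := by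
      have h1 : (blkF S g q).max' hne = (blkF S g q).sup id := by
        rw [Finset.max'_eq_sup', Finset.sup'_eq_sup]
      rw [← h1]
      exact Finset.max'_mem _ _
    rcases (mem_blkF S).mp hsup with ⟨hqS', -⟩ | ⟨p, hp, hgp, hrw⟩
    · exact absurd hqS' hqS
    · rw [hrw]
      have : S.card + rkS S p - S.card = rkS S p := by omega
      rw [this, unrk_rk S z hp, hgp]
  refine ⟨fun B => g (unrkS S z ((B.1).sup id - S.card)), ?_, ?_, ?_⟩
  · rintro ⟨B, hB⟩ ⟨B', hB'⟩ he
    obtain ⟨q, hq, hqS, rfl⟩ := hrep B hB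
    obtain ⟨q', hq', hq'S, rfl⟩ := hrep B' hB'
    simp only at he
    rw [hval q hq hqS, hval q' hq' hq'S] at he
    subst he
    rfl
  · rintro ⟨B, hB⟩
    obtain ⟨q, hq, hqS, rfl⟩ := hrep B hB
    simp only
    rw [hval q hq hqS]
    exact hqS
  · funext p
    by_cases hp : p ∈ S
    swap
    · rw [GF_spec_off S z _ hp, hz p hp]
    have hrkp := rk_bounds S hp
    have hmm : S.card + rkS S p ∈ blkF S g (g p) :=
      (mem_blkF S).mpr (Or.inr ⟨p, hp, rfl, rfl⟩)
    have hBC : blkF S g (g p) ∈ C := by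
      rw [← hPhi, PhiF]
      exact Finset.mem_image.mpr ⟨g p, Finset.mem_union.mpr
        (Or.inr (Finset.mem_image.mpr ⟨p, hp, rfl⟩)), rfl⟩
    have hBeq : blkF S g (g p) = blkOf C (S.card + rkS S p) :=
      (blkOf_spec hC (Finset.mem_Icc.mpr ⟨by omega, by omega⟩)).2.2 _ hBC hmm
    by_cases hgpS : g p ∈ S
    · have hrkgp := rk_bounds S hgpS
      have hrkmem : rkS S (g p) ∈ blkOf C (S.card + rkS S p) := by
        rw [← hBeq]
        exact (mem_blkF S).mpr (Or.inl ⟨hgpS, rfl⟩)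
      have hnotex : blkOf C (S.card + rkS S p) ∉ extrasF S.card C := by
        rw [extrasF, Finset.mem_filter]
        rintro ⟨-, hall⟩
        have := hall _ hrkmem
        omega
      rw [GF_spec_nonextra S z _ hp hnotex]
      obtain ⟨hfil, -, -, -⟩ := sel_spec hC (hBeq ▸ hBC) hnotex
      have hin : rkS S (g p) ∈ (blkOf C (S.card + rkS S p)).filter (· ≤ S.card) :=
        Finset.mem_filter.mpr ⟨hrkmem, by omega⟩
      rw [hfil, Finset.mem_singleton] at hin
      rw [← hin, unrk_rk S z hgpS]
    · have hex : blkOf C (S.card + rkS S p) ∈ extrasF S.card C := by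
        rw [extrasF, Finset.mem_filter, ← hBeq]
        refine ⟨hBeq ▸ hBC, fun x hx => ?_⟩
        rcases (mem_blkF S).mp hx with ⟨hS', -⟩ | ⟨p', hp', -, rfl⟩
        · exact absurd hS' hgpS
        · have := rk_bounds S hp'; omega
      rw [GF_spec_extra S z _ hp hex rfl]
      simp only
      rw [← hBeq]
      exact hval (g p) (Finset.mem_image.mpr ⟨p, hp, rfl⟩) hgpS

lemma fiber_card :
    ((Tset S z j).filter (fun g => PhiF S g = C)).card =
      (n - S.card).descFactorial (j - S.card) := by
  classical
  have himg : (Tset S z j).filter (fun g => PhiF S g = C) =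
      (Finset.univ : Finset ({B // B ∈ extrasF S.card C} ↪ {x // x ∈ Sᶜ})).image
        (fun φ => GF S z (fun B => (φ B : Fin n))) := by
    ext g
    rw [Finset.mem_filter, Finset.mem_image]
    constructor
    · rintro ⟨hT, hPhi⟩
      obtain ⟨φ, hinj, hS, hGF⟩ := fiber_sub S z hC hT hPhi
      refine ⟨⟨fun B => ⟨φ B, Finset.mem_compl.mpr (hS B)⟩,
        fun B B' h => hinj (congrArg Subtype.val h)⟩, Finset.mem_univ _, ?_⟩
      exact hGF
    · rintro ⟨φ, -, rfl⟩
      have := GF_mem S z hC (fun B => (φ B : Fin n))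
        (fun B B' h => φ.injective (Subtype.ext h))
        (fun B => by have := (φ B).2; rw [Finset.mem_compl] at this; exact this)
      exact ⟨this.1, this.2⟩
  rw [himg, Finset.card_image_of_injective _ ?inj, Finset.card_univ,
    Fintype.card_embedding_eq]
  case inj =>
    intro φ φ' h
    have := GF_inj S z hC _ _ h
    apply DFunLike.coe_injective
    funext B
    exact Subtype.ext (congrFun this B)
  rw [Fintype.card_coe, Fintype.card_coe, Finset.card_compl, Fintype.card_fin,
    (extras_card hC).2]

omit hC

lemma Tset_card :
    (Tset S z j).card =
      (PartsFin S.card j).card * (n - S.card).descFactorial (j - S.card) := by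
  classical
  rw [Finset.card_eq_sum_card_fiberwise (f := PhiF S) (t := PartsFin S.card j)
    (fun g hg => by
      rw [Finset.mem_coe, Tset, Finset.mem_filter] at hg
      exact Finset.mem_coe.mpr ((mem_PartsFin).mpr (PhiF_parts S hg.2.2)))]
  rw [Finset.sum_congr rfl (fun C hCm => fiber_card S z ((mem_PartsFin).mp hCm)),
    Finset.sum_const, smul_eq_mul]

end S


section A
variable {n k : ℕ} (P : Fin n → Finset ℕ)

lemma mem_dotAct {g : Fin n → Fin n} {q : Fin n} {x : ℕ} :
    x ∈ dotAct P g q ↔ ∃ p, g p = q ∧ x ∈ P p := by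
  simp [dotAct, Finset.mem_biUnion, Finset.mem_filter]

variable (hP : IsEXP k P)
include hP

lemma memP_Icc {p : Fin n} {x : ℕ} (hx : x ∈ P p) : 1 ≤ x ∧ x ≤ 2 ^ k := by
  have : x ∈ Finset.Icc 1 (2 ^ k) := by
    rw [← hP.2]; exact Finset.mem_sup.mpr ⟨p, Finset.mem_univ p, hx⟩
  exact Finset.mem_Icc.mp this

lemma vMax_P : vMax P = 2 ^ k := by
  rw [vMax, hP.2]
  apply le_antisymm (Finset.sup_le fun x hx => (Finset.mem_Icc.mp hx).2)
  exact Finset.le_sup (f := id) (Finset.mem_Icc.mpr ⟨Nat.one_le_two_pow, le_refl _⟩)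

lemma sup_dotAct (g : Fin n → Fin n) :
    Finset.univ.sup (dotAct P g) = Finset.Icc 1 (2 ^ k) := by
  rw [← hP.2]
  ext x
  simp only [Finset.mem_sup, Finset.mem_univ, true_and]
  constructor
  · rintro ⟨q, hq⟩
    obtain ⟨p, -, hx⟩ := (mem_dotAct P).mp hq
    exact ⟨p, hx⟩
  · rintro ⟨p, hx⟩
    exact ⟨g p, (mem_dotAct P).mpr ⟨p, rfl, hx⟩⟩

lemma vMax_dotAct (g : Fin n → Fin n) : vMax (dotAct P g) = 2 ^ k := by
  rw [vMax, sup_dotAct P hP g]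
  apply le_antisymm (Finset.sup_le fun x hx => (Finset.mem_Icc.mp hx).2)
  exact Finset.le_sup (f := id) (Finset.mem_Icc.mpr ⟨Nat.one_le_two_pow, le_refl _⟩)

lemma mem_F {g : Fin n → Fin n} {q : Fin n} {x : ℕ} :
    x ∈ vUnion P (vUp (dotAct P g)) q ↔
      x ∈ P q ∨ ∃ p, g p = q ∧ ∃ y ∈ P p, y + 2 ^ k = x := by
  simp only [vUnion, vUp, Finset.mem_union, Finset.mem_image, vMax_dotAct P hP g]
  constructor
  · rintro (h | ⟨y, hy, rfl⟩)
    · exact Or.inl h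
    · obtain ⟨p, hp, hyp⟩ := (mem_dotAct P).mp hy
      exact Or.inr ⟨p, hp, y, hyp, rfl⟩
  · rintro (h | ⟨p, hp, y, hy, rfl⟩)
    · exact Or.inl h
    · exact Or.inr ⟨y, (mem_dotAct P).mpr ⟨p, hp, hy⟩, rfl⟩

/-- the support of `P`. -/
lemma nne_F (g : Fin n → Fin n) :
    nne (vUnion P (vUp (dotAct P g))) =
      ((Finset.univ.filter (fun q => P q ≠ ∅)) ∪
        (Finset.univ.filter (fun q => P q ≠ ∅)).image g).card := by
  apply congrArg Finset.card
  ext q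
  simp only [Finset.mem_filter, Finset.mem_univ, true_and, Finset.mem_union, Finset.mem_image,
    ← Finset.nonempty_iff_ne_empty]
  constructor
  · rintro ⟨x, hx⟩
    rcases (mem_F P hP).mp hx with h | ⟨p, hp, y, hy, -⟩
    · exact Or.inl ⟨x, h⟩
    · exact Or.inr ⟨p, ⟨y, hy⟩, hp⟩
  · rintro (⟨x, hx⟩ | ⟨p, ⟨y, hy⟩, hp⟩)
    · exact ⟨x, (mem_F P hP).mpr (Or.inl hx)⟩
    · exact ⟨y + 2 ^ k, (mem_F P hP).mpr (Or.inr ⟨p, hp, y, hy, rfl⟩)⟩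

lemma F_eq_iff {g g' : Fin n → Fin n} :
    vUnion P (vUp (dotAct P g)) = vUnion P (vUp (dotAct P g')) ↔
      ∀ p, P p ≠ ∅ → g p = g' p := by
  constructor
  · intro hF p hp
    obtain ⟨x, hx⟩ := Finset.nonempty_iff_ne_empty.mpr hp
    have hxk := memP_Icc P hP hx
    have h1 : x + 2 ^ k ∈ vUnion P (vUp (dotAct P g)) (g p) :=
      (mem_F P hP).mpr (Or.inr ⟨p, rfl, x, hx, rfl⟩)
    rw [hF] at h1
    rcases (mem_F P hP).mp h1 with h | ⟨p', hp', y, hy, hyx⟩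
    · have := (memP_Icc P hP h).2; omega
    · have : y = x := by omega
      subst this
      by_contra hne
      have hne' : p ≠ p' := by rintro rfl; exact hne hp'.symm
      exact Finset.disjoint_left.mp (hP.1 p p' hne') hx hy
  · intro hag
    funext q
    ext x
    rw [mem_F P hP, mem_F P hP]
    constructor <;> rintro (h | ⟨p, hp, y, hy, hyx⟩)
    · exact Or.inl h
    · refine Or.inr ⟨p, ?_, y, hy, hyx⟩
      rw [← hag p (by intro h0; rw [h0] at hy; simp at hy)]; exact hp
    · exact Or.inl h
    · refine Or.inr ⟨p, ?_, y, hy, hyx⟩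
      rw [hag p (by intro h0; rw [h0] at hy; simp at hy)]; exact hp

lemma succ_filter_eq (hn : 1 ≤ n) (j : ℕ) :
    ((succSet P).filter (fun Q => nne Q = j)) =
      (Finset.univ.filter (fun g : Fin n → Fin n =>
        (∀ p, p ∉ Finset.univ.filter (fun q => P q ≠ ∅) → g p = ⟨0, by omega⟩) ∧
        ((Finset.univ.filter (fun q => P q ≠ ∅)) ∪
          (Finset.univ.filter (fun q => P q ≠ ∅)).image g).card = j)).image
        (fun g => vUnion P (vUp (dotAct P g))) := by
  set S := Finset.univ.filter (fun q => P q ≠ ∅) with hS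
  ext Q
  simp only [succSet, Finset.mem_filter, Finset.mem_image, Finset.mem_univ, true_and]
  constructor
  · rintro ⟨⟨g, rfl⟩, hnj⟩
    refine ⟨fun p => if p ∈ S then g p else ⟨0, by omega⟩, ⟨fun p hp => by simp [hp], ?_⟩, ?_⟩
    · rw [← hnj, nne_F P hP g]
      congr 2
      apply Finset.image_congr
      intro p hp
      simp only [hS, Finset.mem_coe] at hp ⊢
      simp [hp]
    · apply ((F_eq_iff P hP).mpr _).symm
      intro p hp
      have : p ∈ S := by simp [hS, hp]
      simp [this]
  · rintro ⟨g, ⟨-, hcard⟩, rfl⟩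
    exact ⟨⟨g, rfl⟩, by rw [nne_F P hP g]; exact hcard⟩

lemma succ_filter_card (hn : 1 ≤ n) (j : ℕ) :
    ((succSet P).filter (fun Q => nne Q = j)).card =
      (Finset.univ.filter (fun g : Fin n → Fin n =>
        (∀ p, p ∉ Finset.univ.filter (fun q => P q ≠ ∅) → g p = ⟨0, by omega⟩) ∧
        ((Finset.univ.filter (fun q => P q ≠ ∅)) ∪
          (Finset.univ.filter (fun q => P q ≠ ∅)).image g).card = j)).card := by
  rw [succ_filter_eq P hP hn j]
  apply Finset.card_image_of_injOn
  intro g hg g' hg' hF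
  simp only [Finset.mem_coe, Finset.mem_filter] at hg hg'
  funext p
  by_cases hp : p ∈ Finset.univ.filter (fun q => P q ≠ ∅)
  · exact (F_eq_iff P hP).mp hF p (by simpa using hp)
  · simp only [Finset.mem_filter] at hp
    rw [hg.2.1 p hp, hg'.2.1 p hp]

end A


theorem stmt11 (n k i j : ℕ) (hn : 1 ≤ n) (hi1 : 1 ≤ i) (hij : i ≤ j) (hjn : j ≤ n)
    (P : Fin n → Finset ℕ) (hP : IsRvalid k P) (hc : nne P = i) :
    ((succSet P).filter (fun Q => nne Q = j)).card =
      ((n - i).factorial / (n - j).factorial) * rStirling (2 * i) j i := by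
  classical
  obtain ⟨hEXP, -, -⟩ := hP
  rw [succ_filter_card P hEXP hn j]
  have hstep : (Finset.univ.filter (fun g : Fin n → Fin n =>
      (∀ p, p ∉ Finset.univ.filter (fun q => P q ≠ ∅) → g p = ⟨0, by omega⟩) ∧
      ((Finset.univ.filter (fun q => P q ≠ ∅)) ∪
        (Finset.univ.filter (fun q => P q ≠ ∅)).image g).card = j)).card =
      (Tset (Finset.univ.filter (fun q => P q ≠ ∅)) (⟨0, by omega⟩ : Fin n) j).card := by
    congr 1
  rw [hstep, Tset_card]
  have hScard : (Finset.univ.filter (fun q => P q ≠ ∅)).card = i := hc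
  rw [hScard]
  have h3 : j - i ≤ n - i := Nat.sub_le_sub_right hjn i
  have h2 : n - i - (j - i) = n - j := by
    rw [Nat.sub_sub, Nat.add_sub_cancel' hij]
  rw [rStirling_eq i j]
  rw [Nat.descFactorial_eq_div h3]
  rw [h2]
  exact Nat.mul_comm _ _
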